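/- Let k₁,k₂,k₃,k₄ ∈ ℝ with k₁k₄ − k₂k₃ = −1, and define y(x) = 3[3k₃(k₃x−k₁)²(k₄x−k₂) + 2k₄(k₄x−k₂)³ + k₄(k₃x−k₁)³] / ((k₄x−k₂)[2(k₁−k₃x)³ − (k₄x−k₂)³]). Then on any interval where the denominator is nonzero, y satisfies the Chazy equation y''' = 2 y y'' − 3(y')² + (4/27)(6y' − y²)². -/

import Mathlib

set_option maxHeartbeats 4000000

/-- The rational function
    y(x) = 3[3k₃(k₃x-k₁)²(k₄x-k₂) + 2k₄(k₄x-k₂)³ + k₄(k₃x-k₁)³]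
           / ((k₄x-k₂)[2(k₁-k₃x)³ - (k₄x-k₂)³]),
    with k₁k₄ - k₂k₃ = -1, satisfies the Chazy equation with α = 4/27
    wherever the denominator is nonzero. -/
theorem stmt14 (k₁ k₂ k₃ k₄ : ℝ)
    (hk : k₁ * k₄ - k₂ * k₃ = -1)
    (y : ℝ → ℝ)
    (hy : ∀ x, y x = 3 * (3 * k₃ * (k₃ * x - k₁)^2 * (k₄ * x - k₂)
        + 2 * k₄ * (k₄ * x - k₂)^3 + k₄ * (k₃ * x - k₁)^3)
      / ((k₄ * x - k₂) * (2 * (k₁ - k₃ * x)^3 - (k₄ * x - k₂)^3))) :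
    ∀ x, (k₄ * x - k₂) * (2 * (k₁ - k₃ * x)^3 - (k₄ * x - k₂)^3) ≠ 0 →
      deriv^[3] y x = 2 * y x * deriv (deriv y) x - 3 * (deriv y x)^2
        + (4/27) * (6 * deriv y x - (y x)^2)^2 := by
  have hder : ∀ (c : ℝ) (i j : ℕ) (t : ℝ), HasDerivAt
      (fun s : ℝ => c * (k₃*s-k₁)^i * (k₄*s-k₂)^j)
      (c * ((i:ℝ) * (k₃*t-k₁)^(i-1) * k₃) * (k₄*t-k₂)^j
        + c * (k₃*t-k₁)^i * ((j:ℝ) * (k₄*t-k₂)^(j-1) * k₄)) t := by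
    intro c i j t
    have h1 : HasDerivAt (fun s : ℝ => k₃*s-k₁) k₃ t := by
      simpa using ((hasDerivAt_id t).const_mul k₃).sub_const k₁
    have h2 : HasDerivAt (fun s : ℝ => k₄*s-k₂) k₄ t := by
      simpa using ((hasDerivAt_id t).const_mul k₄).sub_const k₂
    exact ((h1.pow i).const_mul c).mul (h2.pow j)
  have Hn : ∀ t : ℝ, HasDerivAt (fun s : ℝ => (9 * k₃) * (k₃*s-k₁)^2 * (k₄*s-k₂)^1 + (3 * k₄) * (k₃*s-k₁)^3 * (k₄*s-k₂)^0 + (6 * k₄) * (k₃*s-k₁)^0 * (k₄*s-k₂)^3) ((18 * k₃^2) * (k₃*t-k₁)^1 * (k₄*t-k₂)^1 + (18 * k₃ * k₄) * (k₃*t-k₁)^2 * (k₄*t-k₂)^0 + (18 * k₄^2) * (k₃*t-k₁)^0 * (k₄*t-k₂)^2) t := by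
    intro t
    exact (((hder (9 * k₃) 2 1 t).add (hder (3 * k₄) 3 0 t)).add (hder (6 * k₄) 0 3 t)).congr_deriv (by generalize k₃*t-k₁ = U; generalize k₄*t-k₂ = V; norm_num; ring)
  have Hd : ∀ t : ℝ, HasDerivAt (fun s : ℝ => ((-2)) * (k₃*s-k₁)^3 * (k₄*s-k₂)^1 + ((-1)) * (k₃*s-k₁)^0 * (k₄*s-k₂)^4) (((-6) * k₃) * (k₃*t-k₁)^2 * (k₄*t-k₂)^1 + ((-2) * k₄) * (k₃*t-k₁)^3 * (k₄*t-k₂)^0 + ((-4) * k₄) * (k₃*t-k₁)^0 * (k₄*t-k₂)^3) t := by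
    intro t
    exact ((hder ((-2)) 3 1 t).add (hder ((-1)) 0 4 t)).congr_deriv (by generalize k₃*t-k₁ = U; generalize k₄*t-k₂ = V; norm_num; ring)
  have Hp1 : ∀ t : ℝ, HasDerivAt (fun s : ℝ => (18 * k₃^2) * (k₃*s-k₁)^4 * (k₄*s-k₂)^2 + ((-18) * k₃^2) * (k₃*s-k₁)^1 * (k₄*s-k₂)^5 + (54 * k₃ * k₄) * (k₃*s-k₁)^2 * (k₄*s-k₂)^4 + (6 * k₄^2) * (k₃*s-k₁)^6 * (k₄*s-k₂)^0 + ((-12) * k₄^2) * (k₃*s-k₁)^3 * (k₄*s-k₂)^3 + (6 * k₄^2) * (k₃*s-k₁)^0 * (k₄*s-k₂)^6) ((72 * k₃^3) * (k₃*t-k₁)^3 * (k₄*t-k₂)^2 + ((-18) * k₃^3) * (k₃*t-k₁)^0 * (k₄*t-k₂)^5 + (36 * k₃^2 * k₄) * (k₃*t-k₁)^4 * (k₄*t-k₂)^1 + (18 * k₃^2 * k₄) * (k₃*t-k₁)^1 * (k₄*t-k₂)^4 + (36 * k₃ * k₄^2) * (k₃*t-k₁)^5 * (k₄*t-k₂)^0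 + (180 * k₃ * k₄^2) * (k₃*t-k₁)^2 * (k₄*t-k₂)^3 + ((-36) * k₄^3) * (k₃*t-k₁)^3 * (k₄*t-k₂)^2 + (36 * k₄^3) * (k₃*t-k₁)^0 * (k₄*t-k₂)^5) t := by
    intro t
    exact ((((((hder (18 * k₃^2) 4 2 t).add (hder ((-18) * k₃^2) 1 5 t)).add (hder (54 * k₃ * k₄) 2 4 t)).add (hder (6 * k₄^2) 6 0 t)).add (hder ((-12) * k₄^2) 3 3 t)).add (hder (6 * k₄^2) 0 6 t)).congr_deriv (by generalize k₃*t-k₁ = U; generalize k₄*t-k₂ = V; norm_num; ring)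
  have Hp2 : ∀ t : ℝ, HasDerivAt (fun s : ℝ => (72 * k₃^3) * (k₃*s-k₁)^6 * (k₄*s-k₂)^3 + ((-252) * k₃^3) * (k₃*s-k₁)^3 * (k₄*s-k₂)^6 + (18 * k₃^3) * (k₃*s-k₁)^0 * (k₄*s-k₂)^9 + (648 * k₃^2 * k₄) * (k₃*s-k₁)^4 * (k₄*s-k₂)^5 + ((-162) * k₃^2 * k₄) * (k₃*s-k₁)^1 * (k₄*s-k₂)^8 + ((-324) * k₃ * k₄^2) * (k₃*s-k₁)^5 * (k₄*s-k₂)^4 + (324 * k₃ * k₄^2) * (k₃*s-k₁)^2 * (k₄*s-k₂)^7 + (24 * k₄^3) * (k₃*s-k₁)^9 * (k₄*s-k₂)^0 + (72 * k₄^3) * (k₃*s-k₁)^6 * (k₄*s-k₂)^3 + ((-108) * k₄^3) * (k₃*s-k₁)^3 * (k₄*s-k₂)^6 + (12 * k₄^3) * (k₃*s-k₁)^0 * (k₄*s-k₂)^9) ((432 * k₃^4) * (k₃*t-k₁)^5 * (k₄*t-k₂)^3 + ((-756) * k₃^4) * (k₃*t-k₁)^2 * (k₄*t-k₂)^6 +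 (216 * k₃^3 * k₄) * (k₃*t-k₁)^6 * (k₄*t-k₂)^2 + (1080 * k₃^3 * k₄) * (k₃*t-k₁)^3 * (k₄*t-k₂)^5 + (1620 * k₃^2 * k₄^2) * (k₃*t-k₁)^4 * (k₄*t-k₂)^4 + ((-648) * k₃^2 * k₄^2) * (k₃*t-k₁)^1 * (k₄*t-k₂)^7 + (216 * k₃ * k₄^3) * (k₃*t-k₁)^8 * (k₄*t-k₂)^0 + ((-864) * k₃ * k₄^3) * (k₃*t-k₁)^5 * (k₄*t-k₂)^3 + (1944 * k₃ * k₄^3) * (k₃*t-k₁)^2 * (k₄*t-k₂)^6 + (216 * k₄^4) * (k₃*t-k₁)^6 * (k₄*t-k₂)^2 + ((-648) * k₄^4) * (k₃*t-k₁)^3 * (k₄*t-k₂)^5 + (108 * k₄^4) * (k₃*t-k₁)^0 * (k₄*t-k₂)^8) t := by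
    intro t
    exact (((((((((((hder (72 * k₃^3) 6 3 t).add (hder ((-252) * k₃^3) 3 6 t)).add (hder (18 * k₃^3) 0 9 t)).add (hder (648 * k₃^2 * k₄) 4 5 t)).add (hder ((-162) * k₃^2 * k₄) 1 8 t)).add (hder ((-324) * k₃ * k₄^2) 5 4 t)).add (hder (324 * k₃ * k₄^2) 2 7 t)).add (hder (24 * k₄^3) 9 0 t)).add (hder (72 * k₄^3) 6 3 t)).add (hder ((-108) * k₄^3) 3 6 t)).add (hder (12 * k₄^3) 0 9 t)).congr_deriv (by generalize k₃*t-k₁ = U; generalize k₄*t-k₂ = V; norm_num; ring)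
  -- canonical functions
  have key1 : ∀ t : ℝ, (((-2)) * (k₃*t-k₁)^3 * (k₄*t-k₂)^1 + ((-1)) * (k₃*t-k₁)^0 * (k₄*t-k₂)^4) ≠ 0 → HasDerivAt y
      (((18 * k₃^2) * (k₃*t-k₁)^4 * (k₄*t-k₂)^2 + ((-18) * k₃^2) * (k₃*t-k₁)^1 * (k₄*t-k₂)^5 + (54 * k₃ * k₄) * (k₃*t-k₁)^2 * (k₄*t-k₂)^4 + (6 * k₄^2) * (k₃*t-k₁)^6 * (k₄*t-k₂)^0 + ((-12) * k₄^2) * (k₃*t-k₁)^3 * (k₄*t-k₂)^3 + (6 * k₄^2) * (k₃*t-k₁)^0 * (k₄*t-k₂)^6) / (((-2)) * (k₃*t-k₁)^3 * (k₄*t-k₂)^1 + ((-1)) * (k₃*t-k₁)^0 * (k₄*t-k₂)^4)^2) t := by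
    intro t ht
    have hyeq : y = fun s : ℝ => ((9 * k₃) * (k₃*s-k₁)^2 * (k₄*s-k₂)^1 + (3 * k₄) * (k₃*s-k₁)^3 * (k₄*s-k₂)^0 + (6 * k₄) * (k₃*s-k₁)^0 * (k₄*s-k₂)^3) / (((-2)) * (k₃*s-k₁)^3 * (k₄*s-k₂)^1 + ((-1)) * (k₃*s-k₁)^0 * (k₄*s-k₂)^4) := by
      funext s
      rw [hy s]
      congr 1 <;> ring
    rw [hyeq]
    exact ((Hn t).div (Hd t) ht).congr_deriv (by ring)
  have key2 : ∀ t : ℝ, (((-2)) * (k₃*t-k₁)^3 * (k₄*t-k₂)^1 + ((-1)) * (k₃*t-k₁)^0 * (k₄*t-k₂)^4) ≠ 0 → HasDerivAt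
      (fun s : ℝ => ((18 * k₃^2) * (k₃*s-k₁)^4 * (k₄*s-k₂)^2 + ((-18) * k₃^2) * (k₃*s-k₁)^1 * (k₄*s-k₂)^5 + (54 * k₃ * k₄) * (k₃*s-k₁)^2 * (k₄*s-k₂)^4 + (6 * k₄^2) * (k₃*s-k₁)^6 * (k₄*s-k₂)^0 + ((-12) * k₄^2) * (k₃*s-k₁)^3 * (k₄*s-k₂)^3 + (6 * k₄^2) * (k₃*s-k₁)^0 * (k₄*s-k₂)^6) / (((-2)) * (k₃*s-k₁)^3 * (k₄*s-k₂)^1 + ((-1)) * (k₃*s-k₁)^0 * (k₄*s-k₂)^4)^2)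
      (((72 * k₃^3) * (k₃*t-k₁)^6 * (k₄*t-k₂)^3 + ((-252) * k₃^3) * (k₃*t-k₁)^3 * (k₄*t-k₂)^6 + (18 * k₃^3) * (k₃*t-k₁)^0 * (k₄*t-k₂)^9 + (648 * k₃^2 * k₄) * (k₃*t-k₁)^4 * (k₄*t-k₂)^5 + ((-162) * k₃^2 * k₄) * (k₃*t-k₁)^1 * (k₄*t-k₂)^8 + ((-324) * k₃ * k₄^2) * (k₃*t-k₁)^5 * (k₄*t-k₂)^4 + (324 * k₃ * k₄^2) * (k₃*t-k₁)^2 * (k₄*t-k₂)^7 + (24 * k₄^3) * (k₃*t-k₁)^9 * (k₄*t-k₂)^0 + (72 * k₄^3) * (k₃*t-k₁)^6 * (k₄*t-k₂)^3 + ((-108) * k₄^3) * (k₃*t-k₁)^3 * (k₄*t-k₂)^6 + (12 * k₄^3) * (k₃*t-k₁)^0 * (k₄*t-k₂)^9) / (((-2)) * (k₃*t-k₁)^3 * (k₄*t-k₂)^1 + ((-1)) * (k₃*t-k₁)^0 * (k₄*t-k₂)^4)^3) t := by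
    intro t ht
    exact ((Hp1 t).div ((Hd t).pow 2) (pow_ne_zero 2 ht)).congr_deriv (by
      simp only [Pi.pow_apply]
      rw [div_eq_div_iff (pow_ne_zero 2 (pow_ne_zero 2 ht)) (pow_ne_zero 3 ht)]
      generalize k₃*t-k₁ = U
      generalize k₄*t-k₂ = V
      norm_num
      ring)
  have key3 : ∀ t : ℝ, (((-2)) * (k₃*t-k₁)^3 * (k₄*t-k₂)^1 + ((-1)) * (k₃*t-k₁)^0 * (k₄*t-k₂)^4) ≠ 0 → HasDerivAt
      (fun s : ℝ => ((72 * k₃^3) * (k₃*s-k₁)^6 * (k₄*s-k₂)^3 + ((-252) * k₃^3) * (k₃*s-k₁)^3 * (k₄*s-k₂)^6 + (18 * k₃^3) * (k₃*s-k₁)^0 * (k₄*s-k₂)^9 + (648 * k₃^2 * k₄) * (k₃*s-k₁)^4 * (k₄*s-k₂)^5 + ((-162) * k₃^2 * k₄) * (k₃*s-k₁)^1 * (k₄*s-k₂)^8 + ((-324) * k₃ * k₄^2) * (k₃*s-k₁)^5 * (k₄*s-k₂)^4 + (324 * k₃ * k₄^2) * (k₃*s-k₁)^2 * (k₄*s-k₂)^7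 + (24 * k₄^3) * (k₃*s-k₁)^9 * (k₄*s-k₂)^0 + (72 * k₄^3) * (k₃*s-k₁)^6 * (k₄*s-k₂)^3 + ((-108) * k₄^3) * (k₃*s-k₁)^3 * (k₄*s-k₂)^6 + (12 * k₄^3) * (k₃*s-k₁)^0 * (k₄*s-k₂)^9) / (((-2)) * (k₃*s-k₁)^3 * (k₄*s-k₂)^1 + ((-1)) * (k₃*s-k₁)^0 * (k₄*s-k₂)^4)^3)
      (((432 * k₃^4) * (k₃*t-k₁)^8 * (k₄*t-k₂)^4 + ((-3456) * k₃^4) * (k₃*t-k₁)^5 * (k₄*t-k₂)^7 + (1080 * k₃^4) * (k₃*t-k₁)^2 * (k₄*t-k₂)^10 + (8640 * k₃^3 * k₄) * (k₃*t-k₁)^6 * (k₄*t-k₂)^6 + ((-6912) * k₃^3 * k₄) * (k₃*t-k₁)^3 * (k₄*t-k₂)^9 + (216 * k₃^3 * k₄) * (k₃*t-k₁)^0 * (k₄*t-k₂)^12 + ((-5184) * k₃^2 * k₄^2) * (k₃*t-k₁)^7 * (k₄*t-k₂)^5 + (12312 * k₃^2 * k₄^2) * (k₃*t-k₁)^4 *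 (k₄*t-k₂)^8 + ((-1296) * k₃^2 * k₄^2) * (k₃*t-k₁)^1 * (k₄*t-k₂)^11 + (864 * k₃ * k₄^3) * (k₃*t-k₁)^8 * (k₄*t-k₂)^4 + ((-6912) * k₃ * k₄^3) * (k₃*t-k₁)^5 * (k₄*t-k₂)^7 + (2160 * k₃ * k₄^3) * (k₃*t-k₁)^2 * (k₄*t-k₂)^10 + (144 * k₄^4) * (k₃*t-k₁)^12 * (k₄*t-k₂)^0 + (288 * k₄^4) * (k₃*t-k₁)^9 * (k₄*t-k₂)^3 + (1296 * k₄^4) * (k₃*t-k₁)^6 * (k₄*t-k₂)^6 + ((-792) * k₄^4) * (k₃*t-k₁)^3 * (k₄*t-k₂)^9 + (36 * k₄^4) * (k₃*t-k₁)^0 * (k₄*t-k₂)^12) / (((-2)) * (k₃*t-k₁)^3 * (k₄*t-k₂)^1 + ((-1)) * (k₃*t-k₁)^0 * (k₄*t-k₂)^4)^4) t := by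
    intro t ht
    exact ((Hp2 t).div ((Hd t).pow 3) (pow_ne_zero 3 ht)).congr_deriv (by
      simp only [Pi.pow_apply]
      rw [div_eq_div_iff (pow_ne_zero 2 (pow_ne_zero 3 ht)) (pow_ne_zero 4 ht)]
      generalize k₃*t-k₁ = U
      generalize k₄*t-k₂ = V
      norm_num
      ring)
  have hcont : Continuous (fun s : ℝ => ((-2)) * (k₃*s-k₁)^3 * (k₄*s-k₂)^1 + ((-1)) * (k₃*s-k₁)^0 * (k₄*s-k₂)^4) := by fun_prop
  have hOpen : IsOpen {t : ℝ | (((-2)) * (k₃*t-k₁)^3 * (k₄*t-k₂)^1 + ((-1)) * (k₃*t-k₁)^0 * (k₄*t-k₂)^4) ≠ 0} :=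
    isOpen_compl_singleton.preimage hcont
  have hd1 : ∀ t : ℝ, (((-2)) * (k₃*t-k₁)^3 * (k₄*t-k₂)^1 + ((-1)) * (k₃*t-k₁)^0 * (k₄*t-k₂)^4) ≠ 0 →
      deriv y t = ((18 * k₃^2) * (k₃*t-k₁)^4 * (k₄*t-k₂)^2 + ((-18) * k₃^2) * (k₃*t-k₁)^1 * (k₄*t-k₂)^5 + (54 * k₃ * k₄) * (k₃*t-k₁)^2 * (k₄*t-k₂)^4 + (6 * k₄^2) * (k₃*t-k₁)^6 * (k₄*t-k₂)^0 + ((-12) * k₄^2) * (k₃*t-k₁)^3 * (k₄*t-k₂)^3 + (6 * k₄^2) * (k₃*t-k₁)^0 * (k₄*t-k₂)^6) / (((-2)) * (k₃*t-k₁)^3 * (k₄*t-k₂)^1 + ((-1)) * (k₃*t-k₁)^0 * (k₄*t-k₂)^4)^2 :=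
    fun t ht => (key1 t ht).deriv
  have hd2 : ∀ t : ℝ, (((-2)) * (k₃*t-k₁)^3 * (k₄*t-k₂)^1 + ((-1)) * (k₃*t-k₁)^0 * (k₄*t-k₂)^4) ≠ 0 →
      deriv (deriv y) t = ((72 * k₃^3) * (k₃*t-k₁)^6 * (k₄*t-k₂)^3 + ((-252) * k₃^3) * (k₃*t-k₁)^3 * (k₄*t-k₂)^6 + (18 * k₃^3) * (k₃*t-k₁)^0 * (k₄*t-k₂)^9 + (648 * k₃^2 * k₄) * (k₃*t-k₁)^4 * (k₄*t-k₂)^5 + ((-162) * k₃^2 * k₄) * (k₃*t-k₁)^1 * (k₄*t-k₂)^8 + ((-324) * k₃ * k₄^2) * (k₃*t-k₁)^5 * (k₄*t-k₂)^4 + (324 * k₃ * k₄^2) * (k₃*t-k₁)^2 * (k₄*t-k₂)^7 + (24 * k₄^3) * (k₃*t-k₁)^9 * (k₄*t-k₂)^0 + (72 * k₄^3) * (k₃*t-k₁)^6 * (k₄*t-k₂)^3 + ((-108) * k₄^3) * (k₃*t-k₁)^3 * (k₄*t-k₂)^6 + (12 * k₄^3) * (k₃*t-k₁)^0 * (k₄*t-k₂)^9)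 / (((-2)) * (k₃*t-k₁)^3 * (k₄*t-k₂)^1 + ((-1)) * (k₃*t-k₁)^0 * (k₄*t-k₂)^4)^3 := by
    intro t ht
    have hev : deriv y =ᶠ[nhds t]
        (fun s : ℝ => ((18 * k₃^2) * (k₃*s-k₁)^4 * (k₄*s-k₂)^2 + ((-18) * k₃^2) * (k₃*s-k₁)^1 * (k₄*s-k₂)^5 + (54 * k₃ * k₄) * (k₃*s-k₁)^2 * (k₄*s-k₂)^4 + (6 * k₄^2) * (k₃*s-k₁)^6 * (k₄*s-k₂)^0 + ((-12) * k₄^2) * (k₃*s-k₁)^3 * (k₄*s-k₂)^3 + (6 * k₄^2) * (k₃*s-k₁)^0 * (k₄*s-k₂)^6) / (((-2)) * (k₃*s-k₁)^3 * (k₄*s-k₂)^1 + ((-1)) * (k₃*s-k₁)^0 * (k₄*s-k₂)^4)^2) := by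
      filter_upwards [hOpen.mem_nhds ht] with s hs using hd1 s hs
    rw [hev.deriv_eq]
    exact (key2 t ht).deriv
  have hd3 : ∀ t : ℝ, (((-2)) * (k₃*t-k₁)^3 * (k₄*t-k₂)^1 + ((-1)) * (k₃*t-k₁)^0 * (k₄*t-k₂)^4) ≠ 0 →
      deriv (deriv (deriv y)) t = ((432 * k₃^4) * (k₃*t-k₁)^8 * (k₄*t-k₂)^4 + ((-3456) * k₃^4) * (k₃*t-k₁)^5 * (k₄*t-k₂)^7 + (1080 * k₃^4) * (k₃*t-k₁)^2 * (k₄*t-k₂)^10 + (8640 * k₃^3 * k₄) * (k₃*t-k₁)^6 * (k₄*t-k₂)^6 + ((-6912) * k₃^3 * k₄) * (k₃*t-k₁)^3 * (k₄*t-k₂)^9 + (216 * k₃^3 * k₄) * (k₃*t-k₁)^0 * (k₄*t-k₂)^12 + ((-5184) * k₃^2 * k₄^2) * (k₃*t-k₁)^7 * (k₄*t-k₂)^5 + (12312 * k₃^2 * k₄^2) * (k₃*t-k₁)^4 * (k₄*t-k₂)^8 + ((-1296) * k₃^2 * k₄^2) * (k₃*t-k₁)^1 * (k₄*t-k₂)^11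 + (864 * k₃ * k₄^3) * (k₃*t-k₁)^8 * (k₄*t-k₂)^4 + ((-6912) * k₃ * k₄^3) * (k₃*t-k₁)^5 * (k₄*t-k₂)^7 + (2160 * k₃ * k₄^3) * (k₃*t-k₁)^2 * (k₄*t-k₂)^10 + (144 * k₄^4) * (k₃*t-k₁)^12 * (k₄*t-k₂)^0 + (288 * k₄^4) * (k₃*t-k₁)^9 * (k₄*t-k₂)^3 + (1296 * k₄^4) * (k₃*t-k₁)^6 * (k₄*t-k₂)^6 + ((-792) * k₄^4) * (k₃*t-k₁)^3 * (k₄*t-k₂)^9 + (36 * k₄^4) * (k₃*t-k₁)^0 * (k₄*t-k₂)^12) / (((-2)) * (k₃*t-k₁)^3 * (k₄*t-k₂)^1 + ((-1)) * (k₃*t-k₁)^0 * (k₄*t-k₂)^4)^4 := by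
    intro t ht
    have hev : deriv (deriv y) =ᶠ[nhds t]
        (fun s : ℝ => ((72 * k₃^3) * (k₃*s-k₁)^6 * (k₄*s-k₂)^3 + ((-252) * k₃^3) * (k₃*s-k₁)^3 * (k₄*s-k₂)^6 + (18 * k₃^3) * (k₃*s-k₁)^0 * (k₄*s-k₂)^9 + (648 * k₃^2 * k₄) * (k₃*s-k₁)^4 * (k₄*s-k₂)^5 + ((-162) * k₃^2 * k₄) * (k₃*s-k₁)^1 * (k₄*s-k₂)^8 + ((-324) * k₃ * k₄^2) * (k₃*s-k₁)^5 * (k₄*s-k₂)^4 + (324 * k₃ * k₄^2) * (k₃*s-k₁)^2 * (k₄*s-k₂)^7 + (24 * k₄^3) * (k₃*s-k₁)^9 * (k₄*s-k₂)^0 + (72 * k₄^3) * (k₃*s-k₁)^6 * (k₄*s-k₂)^3 + ((-108) * k₄^3) * (k₃*s-k₁)^3 * (k₄*s-k₂)^6 + (12 * k₄^3) * (k₃*s-k₁)^0 * (k₄*s-k₂)^9) / (((-2)) * (k₃*s-k₁)^3 * (k₄*s-k₂)^1 + ((-1)) * (k₃*s-k₁)^0 * (k₄*s-k₂)^4)^3)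 := by
      filter_upwards [hOpen.mem_nhds ht] with s hs using hd2 s hs
    rw [hev.deriv_eq]
    exact (key3 t ht).deriv
  intro x hx
  have hdx : (((-2)) * (k₃*x-k₁)^3 * (k₄*x-k₂)^1 + ((-1)) * (k₃*x-k₁)^0 * (k₄*x-k₂)^4) ≠ 0 := by
    intro h
    exact hx (by linear_combination h)
  have hyx : y x = ((9 * k₃) * (k₃*x-k₁)^2 * (k₄*x-k₂)^1 + (3 * k₄) * (k₃*x-k₁)^3 * (k₄*x-k₂)^0 + (6 * k₄) * (k₃*x-k₁)^0 * (k₄*x-k₂)^3) / (((-2)) * (k₃*x-k₁)^3 * (k₄*x-k₂)^1 + ((-1)) * (k₃*x-k₁)^0 * (k₄*x-k₂)^4) := by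
    rw [hy x]
    congr 1 <;> ring
  have hit : deriv^[3] y x = deriv (deriv (deriv y)) x := rfl
  rw [hit, hd3 x hdx, hd2 x hdx, hd1 x hdx, hyx]
  set U := k₃*x-k₁ with hU
  set V := k₄*x-k₂ with hV
  set A := (9 * k₃) * U^2 * V^1 + (3 * k₄) * U^3 * V^0 + (6 * k₄) * U^0 * V^3 with hA
  set B := (18 * k₃^2) * U^4 * V^2 + ((-18) * k₃^2) * U^1 * V^5 + (54 * k₃ * k₄) * U^2 * V^4 + (6 * k₄^2) * U^6 * V^0 + ((-12) * k₄^2) * U^3 * V^3 + (6 * k₄^2) * U^0 * V^6 with hB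
  set C := (72 * k₃^3) * U^6 * V^3 + ((-252) * k₃^3) * U^3 * V^6 + (18 * k₃^3) * U^0 * V^9 + (648 * k₃^2 * k₄) * U^4 * V^5 + ((-162) * k₃^2 * k₄) * U^1 * V^8 + ((-324) * k₃ * k₄^2) * U^5 * V^4 + (324 * k₃ * k₄^2) * U^2 * V^7 + (24 * k₄^3) * U^9 * V^0 + (72 * k₄^3) * U^6 * V^3 + ((-108) * k₄^3) * U^3 * V^6 + (12 * k₄^3) * U^0 * V^9 with hC
  set E := (432 * k₃^4) * U^8 * V^4 + ((-3456) * k₃^4) * U^5 * V^7 + (1080 * k₃^4) * U^2 * V^10 + (8640 * k₃^3 * k₄) * U^6 * V^6 + ((-6912) * k₃^3 * k₄) * U^3 * V^9 + (216 * k₃^3 * k₄) * U^0 * V^12 + ((-5184) * k₃^2 * k₄^2) * U^7 * V^5 + (12312 * k₃^2 * k₄^2) * U^4 * V^8 + ((-1296) * k₃^2 * k₄^2) * U^1 * V^11 + (864 * k₃ * k₄^3) * U^8 * V^4 + ((-6912) * k₃ * k₄^3) * U^5 * V^7 + (2160 * k₃ * k₄^3) * U^2 * V^10 + (144 * k₄^4)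 * U^12 * V^0 + (288 * k₄^4) * U^9 * V^3 + (1296 * k₄^4) * U^6 * V^6 + ((-792) * k₄^4) * U^3 * V^9 + (36 * k₄^4) * U^0 * V^12 with hE
  set W := ((-2)) * U^3 * V^1 + ((-1)) * U^0 * V^4 with hW
  clear_value U V A B C E W
  have main : E = 2*A*C - 3*B^2 + 4/27*(6*B - A^2)^2 := by
    rw [hA, hB, hC, hE]; ring
  clear hA hB hC hE hW hU hV hyx hy hd1 hd2 hd3 key1 key2 key3 Hn Hd Hp1 Hp2 hder hx hit
  rw [main]
  field_simp
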